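/- For a random variable Y with E|Y| < ∞, the map τ ↦ μ_τ(Y) from (0,1) to ℝ is continuous. -/
import Mathlib

open MeasureTheory Filter Set Asymptotics

noncomputable def ident (τ x y : ℝ) : ℝ :=
  if x ≤ y then τ * (y - x) else -((1 - τ) * (x - y))

noncomputable def score (τ x y : ℝ) : ℝ :=
  τ / 2 * ((max (y - x) 0) ^ 2 - (max y 0) ^ 2) +
    (1 - τ) / 2 * ((max (x - y) 0) ^ 2 - (max (-y) 0) ^ 2)

lemma ident_eq (τ x y : ℝ) :
    ident τ x y = τ * max (y - x) 0 - (1 - τ) * max (x - y) 0 := by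
  unfold ident
  rcases le_or_gt x y with h | h
  · rw [if_pos h, max_eq_left (by linarith), max_eq_right (by linarith)]; ring
  · rw [if_neg (not_le.mpr h), max_eq_right (by linarith), max_eq_left (by linarith)]; ring

lemma expectile_key {Ω : Type*} [MeasurableSpace Ω] (P : Measure Ω) [IsProbabilityMeasure P]
    (Y : Ω → ℝ) (hY : Integrable Y P) (τ τ₀ x x₀ : ℝ)
    (hτ : τ ∈ Set.Ioo (0:ℝ) 1)
    (h1 : ∫ ω, ident τ x (Y ω) ∂P = 0) (h2 : ∫ ω, ident τ₀ x₀ (Y ω) ∂P = 0) :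
    min τ (1 - τ) * |x - x₀| ≤
      |τ - τ₀| * ((∫ ω, max (Y ω - x₀) 0 ∂P) + ∫ ω, max (x₀ - Y ω) 0 ∂P) := by
  have intA : ∀ z : ℝ, Integrable (fun ω => max (Y ω - z) 0) P := fun z =>
    (hY.sub (integrable_const z)).pos_part
  have intB : ∀ z : ℝ, Integrable (fun ω => max (z - Y ω) 0) P := fun z =>
    ((integrable_const z).sub hY).pos_part
  set A : ℝ → ℝ := fun z => ∫ ω, max (Y ω - z) 0 ∂P with hAdef
  set B : ℝ → ℝ := fun z => ∫ ω, max (z - Y ω) 0 ∂P with hBdef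
  have gf : ∀ (σ z : ℝ), ∫ ω, ident σ z (Y ω) ∂P = σ * A z - (1 - σ) * B z := by
    intro σ z
    simp_rw [ident_eq]
    rw [integral_sub ((intA z).const_mul σ) ((intB z).const_mul (1 - σ)),
      integral_const_mul, integral_const_mul]
  have hAB : ∀ z : ℝ, A z - B z = (∫ ω, Y ω ∂P) - z := by
    intro z
    rw [hAdef, hBdef]
    simp only
    rw [← integral_sub (intA z) (intB z)]
    have : ∀ ω, max (Y ω - z) 0 - max (z - Y ω) 0 = Y ω - z := by
      intro ω
      rcases le_total z (Y ω) with h | h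
      · rw [max_eq_left (by linarith), max_eq_right (by linarith)]; ring
      · rw [max_eq_right (by linarith), max_eq_left (by linarith)]; ring
    simp_rw [this]
    rw [integral_sub hY (integrable_const z), integral_const]
    simp
  have hAmono : ∀ z z' : ℝ, z ≤ z' → A z' ≤ A z := by
    intro z z' h
    exact integral_mono (intA z') (intA z) fun ω => max_le_max (by linarith) le_rfl
  have hBmono : ∀ z z' : ℝ, z ≤ z' → B z ≤ B z' := by
    intro z z' h
    exact integral_mono (intB z) (intB z') fun ω => max_le_max (by linarith) le_rfl
  obtain ⟨hτ0, hτ1⟩ := hτ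
  have hmin0 : 0 < min τ (1 - τ) := lt_min hτ0 (by linarith)
  -- key monotonicity estimate
  have claim : ∀ z z' : ℝ, z ≤ z' →
      min τ (1 - τ) * (z' - z) ≤ (τ * A z - (1 - τ) * B z) - (τ * A z' - (1 - τ) * B z') := by
    intro z z' h
    have hΔa : 0 ≤ A z - A z' := by linarith [hAmono z z' h]
    have hΔb : 0 ≤ B z' - B z := by linarith [hBmono z z' h]
    have hsum : (A z - A z') + (B z' - B z) = z' - z := by
      have := hAB z; have := hAB z'; linarith
    have h1 := min_le_left τ (1 - τ)
    have h2 := min_le_right τ (1 - τ)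
    nlinarith [mul_le_mul_of_nonneg_right h1 hΔa, mul_le_mul_of_nonneg_right h2 hΔb]
  have hgx : τ * A x - (1 - τ) * B x = 0 := by rw [← gf]; exact h1
  have hgx0 : τ₀ * A x₀ - (1 - τ₀) * B x₀ = 0 := by rw [← gf]; exact h2
  -- |g τ x - g τ x₀| bound from below
  have hlb : min τ (1 - τ) * |x - x₀| ≤ |τ * A x₀ - (1 - τ) * B x₀| := by
    rcases le_total x x₀ with h | h
    · have := claim x x₀ h
      rw [abs_of_nonpos (by linarith)]
      calc min τ (1 - τ) * -(x - x₀) ≤ (τ * A x - (1-τ) * B x) - (τ * A x₀ - (1-τ) * B x₀) := by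
            have : -(x - x₀) = x₀ - x := by ring
            rw [this]; exact claim x x₀ h
        _ = -(τ * A x₀ - (1-τ) * B x₀) := by rw [hgx]; ring
        _ ≤ |τ * A x₀ - (1 - τ) * B x₀| := neg_le_abs _
    · have := claim x₀ x h
      rw [abs_of_nonneg (by linarith)]
      calc min τ (1 - τ) * (x - x₀) ≤ (τ * A x₀ - (1-τ) * B x₀) - (τ * A x - (1-τ) * B x) :=
            claim x₀ x h
        _ = τ * A x₀ - (1-τ) * B x₀ := by rw [hgx]; ring
        _ ≤ |τ * A x₀ - (1 - τ) * B x₀| := le_abs_self _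
  have hAnn : 0 ≤ A x₀ := integral_nonneg fun ω => le_max_right _ _
  have hBnn : 0 ≤ B x₀ := integral_nonneg fun ω => le_max_right _ _
  have heq : τ * A x₀ - (1 - τ) * B x₀ = (τ - τ₀) * (A x₀ + B x₀) := by
    nlinarith [hgx0]
  calc min τ (1 - τ) * |x - x₀| ≤ |τ * A x₀ - (1 - τ) * B x₀| := hlb
    _ = |τ - τ₀| * |A x₀ + B x₀| := by rw [heq, abs_mul]
    _ = |τ - τ₀| * (A x₀ + B x₀) := by rw [abs_of_nonneg (show (0:ℝ) ≤ A x₀ + B x₀ by linarith)]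

theorem expectile_continuous_in_tau
    {Ω : Type*} [MeasurableSpace Ω] (P : Measure Ω) [IsProbabilityMeasure P]
    (Y : Ω → ℝ) (hY : Integrable Y P)
    (μ : ℝ → ℝ) (hμ : ∀ τ ∈ Set.Ioo (0:ℝ) 1, ∫ ω, ident τ (μ τ) (Y ω) ∂P = 0) :
    ContinuousOn μ (Set.Ioo (0:ℝ) 1) := by
  intro τ₀ hτ₀
  set x₀ := μ τ₀ with hx₀
  set K : ℝ := (∫ ω, max (Y ω - x₀) 0 ∂P) + ∫ ω, max (x₀ - Y ω) 0 ∂P with hK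
  have hbound : ∀ τ ∈ Set.Ioo (0:ℝ) 1, min τ (1 - τ) * |μ τ - x₀| ≤ |τ - τ₀| * K :=
    fun τ hτ => expectile_key P Y hY τ τ₀ (μ τ) x₀ hτ (hμ τ hτ) (hμ τ₀ hτ₀)
  obtain ⟨h0, h1⟩ := hτ₀
  have hm₀ : 0 < min τ₀ (1 - τ₀) := lt_min h0 (by linarith)
  rw [ContinuousWithinAt, tendsto_iff_dist_tendsto_zero]
  have hg : Tendsto (fun τ => |τ - τ₀| * K / min τ (1 - τ)) (nhdsWithin τ₀ (Set.Ioo (0:ℝ) 1))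
      (nhds 0) := by
    have hc : ContinuousAt (fun τ => |τ - τ₀| * K / min τ (1 - τ)) τ₀ := by
      apply ContinuousAt.div
      · fun_prop
      · fun_prop
      · exact ne_of_gt hm₀
    have := tendsto_nhdsWithin_of_tendsto_nhds (s := Set.Ioo (0:ℝ) 1) hc.tendsto
    simpa using this
  apply squeeze_zero' (Eventually.of_forall fun τ => dist_nonneg) _ hg
  filter_upwards [self_mem_nhdsWithin] with τ hτ
  have hmin : 0 < min τ (1 - τ) := lt_min hτ.1 (by linarith [hτ.2])
  rw [Real.dist_eq, le_div_iff₀ hmin]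
  have := hbound τ hτ
  linarith [this]
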